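/- Let v : ℝ³ → ℝ³ be a Schwartz vector field (each component a Schwartz function) with ∑_j ∂_j v_j = 0 everywhere, and let f : ℝ³ → ℝ be a Schwartz function. Then for every ξ ∈ ℝ³, |𝓕(v·∇f)(ξ)| ≤ 2π |ξ| ‖v‖_{L²} ‖f‖_{L²}, where v·∇f = ∑_j v_j ∂_j f and ‖v‖²_{L²} = ∑_j ‖v_j‖²_{L²}. -/

import Mathlib

open MeasureTheory FourierTransform

namespace Stmt10Aux

open SchwartzMap Complex Real
open scoped RealInnerProductSpace

noncomputable section

abbrev E3 := EuclideanSpace ℝ (Fin 3)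

lemma htg (f : 𝓢(E3, ℝ)) : Function.HasTemperateGrowth (⇑f) :=
  ⟨f.smooth ⊤, fun n => ⟨0, SchwartzMap.seminorm ℝ 0 n f, fun x => by
    simpa using f.norm_iteratedFDeriv_le_seminorm ℝ n x⟩⟩

/-- Pointwise product of Schwartz functions, as a Schwartz function. -/
def mulS (f g : 𝓢(E3, ℝ)) : 𝓢(E3, ℝ) :=
  SchwartzMap.bilinLeftCLM (ContinuousLinearMap.mul ℝ ℝ) (htg g) f

lemma mulS_apply (f g : 𝓢(E3, ℝ)) (x : E3) : mulS f g x = f x * g x := rfl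

lemma memLp_two (f : 𝓢(E3, ℝ)) : MemLp (⇑f) 2 (volume : Measure E3) := by
  refine (memLp_two_iff_integrable_sq f.continuous.aestronglyMeasurable).2 ?_
  have h := (mulS f f).integrable (μ := volume)
  exact h.congr (Filter.Eventually.of_forall fun x => by simp [mulS_apply, sq])

lemma cs_sqrt (a b : Fin 3 → ℝ) (ha : ∀ i, 0 ≤ a i) (hb : ∀ i, 0 ≤ b i) :
    ∑ i, a i * b i ≤ Real.sqrt (∑ i, a i ^ 2) * Real.sqrt (∑ i, b i ^ 2) := by
  have h := Finset.sum_mul_sq_le_sq_mul_sq Finset.univ a b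
  have h0 : 0 ≤ ∑ i, a i * b i :=
    Finset.sum_nonneg fun i _ => mul_nonneg (ha i) (hb i)
  calc ∑ i, a i * b i = Real.sqrt ((∑ i, a i * b i) ^ 2) := (Real.sqrt_sq h0).symm
    _ ≤ Real.sqrt ((∑ i, a i ^ 2) * ∑ i, b i ^ 2) := Real.sqrt_le_sqrt h
    _ = _ := Real.sqrt_mul (Finset.sum_nonneg fun i _ => sq_nonneg _) _

lemma hoelder (a b : 𝓢(E3, ℝ)) :
    ∫ x, ‖a x * b x‖ ≤
      (eLpNorm (⇑a) 2 volume).toReal * (eLpNorm (⇑b) 2 volume).toReal := by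
  have ha := memLp_two a
  have hb := memLp_two b
  have hpq : (2:ℝ).HolderConjugate 2 := by constructor <;> norm_num
  have h2 : ENNReal.ofReal (2:ℝ) = 2 := by norm_num
  have ha' : MemLp (⇑a) (ENNReal.ofReal (2:ℝ)) volume := by rw [h2]; exact ha
  have hb' : MemLp (⇑b) (ENNReal.ofReal (2:ℝ)) volume := by rw [h2]; exact hb
  have H := integral_mul_norm_le_Lp_mul_Lq hpq ha' hb'
  have ea : (eLpNorm (⇑a) 2 volume).toReal = (∫ x, ‖a x‖ ^ (2:ℝ)) ^ (1/(2:ℝ)) := by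
    rw [ha.eLpNorm_eq_integral_rpow_norm (by norm_num) (by norm_num)]
    rw [ENNReal.toReal_ofReal (by positivity)]
    norm_num
  have eb : (eLpNorm (⇑b) 2 volume).toReal = (∫ x, ‖b x‖ ^ (2:ℝ)) ^ (1/(2:ℝ)) := by
    rw [hb.eLpNorm_eq_integral_rpow_norm (by norm_num) (by norm_num)]
    rw [ENNReal.toReal_ofReal (by positivity)]
    norm_num
  calc ∫ x, ‖a x * b x‖ = ∫ x, ‖a x‖ * ‖b x‖ := by
        simp [norm_mul]
    _ ≤ (∫ x, ‖a x‖ ^ (2:ℝ)) ^ (1/(2:ℝ)) * (∫ x, ‖b x‖ ^ (2:ℝ)) ^ (1/(2:ℝ)) := H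
    _ = _ := by rw [ea, eb]

lemma step_norm (h : 𝓢(E3, ℝ)) (w ξ : E3) :
    ‖𝓕 (fun x => ((fderiv ℝ (⇑h) x w : ℝ) : ℂ)) ξ‖
      ≤ 2 * π * |(⟪ξ, w⟫)| * ∫ x, ‖h x‖ := by
  set H : E3 → ℂ := fun x => (h x : ℂ) with hH
  have hHdiff : Differentiable ℝ H :=
    Complex.ofRealCLM.differentiable.comp h.differentiable
  have hfd : ∀ x, fderiv ℝ H x = Complex.ofRealCLM.comp (fderiv ℝ (⇑h) x) := fun x =>
    (Complex.ofRealCLM.hasFDerivAt.comp x h.differentiableAt.hasFDerivAt).fderiv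
  have hHint : Integrable H volume := (h.integrable (μ := volume)).ofReal
  have hdint : Integrable (fun x => fderiv ℝ (⇑h) x) volume := by
    have := (SchwartzMap.fderivCLM ℝ E3 ℝ h).integrable (μ := volume)
    refine this.congr (Filter.Eventually.of_forall fun x => ?_)
    simp [SchwartzMap.fderivCLM_apply]
  have hfint : Integrable (fderiv ℝ H) volume := by
    have hc := (ContinuousLinearMap.compSL E3 ℝ ℂ (RingHom.id ℝ) (RingHom.id ℝ)
      Complex.ofRealCLM).integrable_comp hdint
    refine hc.congr (Filter.Eventually.of_forall fun x => ?_)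
    rw [hfd x]; rfl
  have key := Real.fourier_fderiv hHint hHdiff hfint
  have happ : 𝓕 (fun x => ((fderiv ℝ (⇑h) x w : ℝ) : ℂ)) ξ
      = 𝓕 (fderiv ℝ H) ξ w := by
    rw [Real.fourier_continuousLinearMap_apply hfint]
    refine congrArg (fun g : E3 → ℂ => 𝓕 g ξ) ?_
    funext x
    rw [hfd x]
    rfl
  rw [happ, key]
  rw [VectorFourier.fourierSMulRight_apply]
  have hb : ‖𝓕 H ξ‖ ≤ ∫ x, ‖h x‖ := by
    have := VectorFourier.norm_fourierIntegral_le_integral_norm 𝐞 volume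
      (innerₗ E3) H ξ
    refine (le_of_eq rfl).trans (this.trans (le_of_eq ?_)); simp [hH, Complex.norm_real]
  calc ‖(-(2 * ↑π * I)) • ((-innerSL ℝ) ξ w) • 𝓕 H ξ‖
      = (2 * π) * (|(⟪ξ, w⟫)| * ‖𝓕 H ξ‖) := by
        rw [norm_smul, norm_smul]
        simp [_root_.abs_of_nonneg Real.pi_nonneg, Real.norm_eq_abs, mul_assoc]
    _ ≤ (2 * π) * (|(⟪ξ, w⟫)| * ∫ x, ‖h x‖) := by
        gcongr
    _ = 2 * π * |(⟪ξ, w⟫)| * ∫ x, ‖h x‖ := by ring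

end

end Stmt10Aux

set_option maxHeartbeats 1000000 in
/-- For a divergence-free Schwartz vector field `v` and a Schwartz function `f` on
`ℝ³`, the Fourier transform of `v·∇f` satisfies
`|𝓕(v·∇f)(ξ)| ≤ 2π |ξ| ‖v‖_{L²} ‖f‖_{L²}`. -/
theorem stmt10 (v : Fin 3 → SchwartzMap (EuclideanSpace ℝ (Fin 3)) ℝ)
    (f : SchwartzMap (EuclideanSpace ℝ (Fin 3)) ℝ)
    (hdiv : ∀ x : EuclideanSpace ℝ (Fin 3),
      ∑ j, fderiv ℝ (v j) x (EuclideanSpace.single j 1) = 0) :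
    ∀ ξ : EuclideanSpace ℝ (Fin 3),
      ‖𝓕 (fun x => ((∑ j, v j x * fderiv ℝ f x (EuclideanSpace.single j 1) : ℝ) : ℂ)) ξ‖
        ≤ 2 * Real.pi * ‖ξ‖
          * Real.sqrt (∑ j, ((eLpNorm (fun x => v j x) 2 volume).toReal) ^ 2)
          * (eLpNorm (fun x => f x) 2 volume).toReal := by
  intro ξ
  have hip : ∀ j : Fin 3, (@inner ℝ _ _ ξ (EuclideanSpace.single j (1:ℝ))) = ξ j := by
    intro j
    simp [EuclideanSpace.inner_single_right, EuclideanSpace.inner_single_left]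
  set h : Fin 3 → SchwartzMap (EuclideanSpace ℝ (Fin 3)) ℝ :=
    fun j => Stmt10Aux.mulS (v j) f with hh
  have hpt : ∀ x, (∑ j, v j x * fderiv ℝ f x (EuclideanSpace.single j 1))
      = ∑ j, fderiv ℝ (⇑(h j)) x (EuclideanSpace.single j 1) := by
    intro x
    have hderiv : ∀ j, fderiv ℝ (⇑(h j)) x
        = v j x • fderiv ℝ (⇑f) x + f x • fderiv ℝ (⇑(v j)) x := by
      intro j
      have hc : (⇑(h j)) = fun y => v j y * f y := rfl
      rw [hc, fderiv_fun_mul ((v j).differentiableAt) (f.differentiableAt)]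
    have hsum : ∑ j, fderiv ℝ (⇑(h j)) x (EuclideanSpace.single j 1)
        = ∑ j, (v j x * fderiv ℝ (⇑f) x (EuclideanSpace.single j 1)
            + f x * fderiv ℝ (⇑(v j)) x (EuclideanSpace.single j 1)) := by
      refine Finset.sum_congr rfl fun j _ => ?_
      rw [hderiv j]; simp
    rw [hsum, Finset.sum_add_distrib, ← Finset.mul_sum, hdiv x, mul_zero, add_zero]
  have hintc : ∀ j : Fin 3,
      Integrable (fun x => ((fderiv ℝ (⇑(h j)) x (EuclideanSpace.single j 1) : ℝ) : ℂ))
        volume := by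
    intro j
    have : Integrable
        (fun x => (((LineDeriv.lineDerivOp (EuclideanSpace.single j (1:ℝ)) (h j) : SchwartzMap (EuclideanSpace ℝ (Fin 3)) ℝ) x : ℝ) : ℂ))
        volume :=
      ((LineDeriv.lineDerivOp (EuclideanSpace.single j (1:ℝ)) (h j) : SchwartzMap (EuclideanSpace ℝ (Fin 3)) ℝ).integrable
        (μ := volume)).ofReal
    refine this.congr (Filter.Eventually.of_forall fun x => ?_)
    simp [SchwartzMap.lineDerivOp_apply_eq_fderiv]
  have hsplit : 𝓕 (fun x => ((∑ j, v j x * fderiv ℝ f x (EuclideanSpace.single j 1) : ℝ) : ℂ)) ξ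
      = ∑ j, 𝓕 (fun x => ((fderiv ℝ (⇑(h j)) x (EuclideanSpace.single j 1) : ℝ) : ℂ)) ξ := by
    have hcongr : (fun x : EuclideanSpace ℝ (Fin 3) =>
          ((∑ j, v j x * fderiv ℝ f x (EuclideanSpace.single j 1) : ℝ) : ℂ))
        = fun x => ∑ j, ((fderiv ℝ (⇑(h j)) x (EuclideanSpace.single j 1) : ℝ) : ℂ) := by
      funext x
      rw [hpt x]
      push_cast
      rfl
    rw [hcongr, Real.fourier_eq]
    simp_rw [Finset.smul_sum]
    rw [integral_finset_sum _ (fun j _ => (Real.fourierIntegral_convergent_iff ξ).2 (hintc j))]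
    rfl
  have hF0 : (0:ℝ) ≤ (eLpNorm (fun x => f x) 2 volume).toReal := ENNReal.toReal_nonneg
  have hbound : ∀ j : Fin 3,
      ‖𝓕 (fun x => ((fderiv ℝ (⇑(h j)) x (EuclideanSpace.single j 1) : ℝ) : ℂ)) ξ‖
        ≤ 2 * Real.pi * (|ξ j| * ((eLpNorm (fun x => v j x) 2 volume).toReal
            * (eLpNorm (fun x => f x) 2 volume).toReal)) := by
    intro j
    refine (Stmt10Aux.step_norm (h j) (EuclideanSpace.single j 1) ξ).trans ?_
    have hInt : ∫ x, ‖(h j) x‖ ≤ (eLpNorm (fun x => v j x) 2 volume).toReal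
        * (eLpNorm (fun x => f x) 2 volume).toReal := by
      exact Stmt10Aux.hoelder (v j) f
    calc 2 * Real.pi * |(@inner ℝ _ _ ξ (EuclideanSpace.single j (1:ℝ)))| * ∫ x, ‖(h j) x‖
        ≤ 2 * Real.pi * |(@inner ℝ _ _ ξ (EuclideanSpace.single j (1:ℝ)))|
            * ((eLpNorm (fun x => v j x) 2 volume).toReal
              * (eLpNorm (fun x => f x) 2 volume).toReal) := by
          refine mul_le_mul_of_nonneg_left hInt (by positivity)
      _ = 2 * Real.pi * (|ξ j| * ((eLpNorm (fun x => v j x) 2 volume).toReal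
            * (eLpNorm (fun x => f x) 2 volume).toReal)) := by
          rw [hip j]; ring
  have hcs : ∑ j : Fin 3, |ξ j| * ((eLpNorm (fun x => v j x) 2 volume).toReal
        * (eLpNorm (fun x => f x) 2 volume).toReal)
      ≤ ‖ξ‖ * (Real.sqrt (∑ j, ((eLpNorm (fun x => v j x) 2 volume).toReal) ^ 2)
          * (eLpNorm (fun x => f x) 2 volume).toReal) := by
    have h1 := Stmt10Aux.cs_sqrt (fun j => |ξ j|)
      (fun j => (eLpNorm (fun x => v j x) 2 volume).toReal
        * (eLpNorm (fun x => f x) 2 volume).toReal)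
      (fun j => abs_nonneg _)
      (fun j => mul_nonneg ENNReal.toReal_nonneg ENNReal.toReal_nonneg)
    have h2 : Real.sqrt (∑ j : Fin 3, |ξ j| ^ 2) = ‖ξ‖ := by
      simp only [EuclideanSpace.norm_eq, Real.norm_eq_abs]
    have h3 : Real.sqrt (∑ j : Fin 3, ((eLpNorm (fun x => v j x) 2 volume).toReal
          * (eLpNorm (fun x => f x) 2 volume).toReal) ^ 2)
        = Real.sqrt (∑ j, ((eLpNorm (fun x => v j x) 2 volume).toReal) ^ 2)
          * (eLpNorm (fun x => f x) 2 volume).toReal := by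
      have hsq : ∑ j : Fin 3, ((eLpNorm (fun x => v j x) 2 volume).toReal
            * (eLpNorm (fun x => f x) 2 volume).toReal) ^ 2
          = (∑ j : Fin 3, ((eLpNorm (fun x => v j x) 2 volume).toReal) ^ 2)
            * ((eLpNorm (fun x => f x) 2 volume).toReal) ^ 2 := by
        rw [Finset.sum_mul]
        exact Finset.sum_congr rfl fun j _ => by ring
      rw [hsq, Real.sqrt_mul (Finset.sum_nonneg fun j _ => sq_nonneg _) _, Real.sqrt_sq hF0]
    calc ∑ j : Fin 3, |ξ j| * ((eLpNorm (fun x => v j x) 2 volume).toReal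
          * (eLpNorm (fun x => f x) 2 volume).toReal)
        ≤ Real.sqrt (∑ j : Fin 3, |ξ j| ^ 2)
            * Real.sqrt (∑ j : Fin 3, ((eLpNorm (fun x => v j x) 2 volume).toReal
              * (eLpNorm (fun x => f x) 2 volume).toReal) ^ 2) := h1
      _ = _ := by rw [h2, h3]
  calc ‖𝓕 (fun x => ((∑ j, v j x * fderiv ℝ f x (EuclideanSpace.single j 1) : ℝ) : ℂ)) ξ‖
      = ‖∑ j, 𝓕 (fun x => ((fderiv ℝ (⇑(h j)) x (EuclideanSpace.single j 1) : ℝ) : ℂ)) ξ‖ := by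
        rw [hsplit]
    _ ≤ ∑ j, ‖𝓕 (fun x => ((fderiv ℝ (⇑(h j)) x (EuclideanSpace.single j 1) : ℝ) : ℂ)) ξ‖ :=
        norm_sum_le _ _
    _ ≤ ∑ j : Fin 3, 2 * Real.pi * (|ξ j| * ((eLpNorm (fun x => v j x) 2 volume).toReal
          * (eLpNorm (fun x => f x) 2 volume).toReal)) :=
        Finset.sum_le_sum fun j _ => hbound j
    _ = 2 * Real.pi * ∑ j : Fin 3, |ξ j| * ((eLpNorm (fun x => v j x) 2 volume).toReal
          * (eLpNorm (fun x => f x) 2 volume).toReal) := by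
        rw [Finset.mul_sum]
    _ ≤ 2 * Real.pi * (‖ξ‖ * (Real.sqrt (∑ j, ((eLpNorm (fun x => v j x) 2 volume).toReal) ^ 2)
          * (eLpNorm (fun x => f x) 2 volume).toReal)) := by
        refine mul_le_mul_of_nonneg_left hcs (by positivity)
    _ = 2 * Real.pi * ‖ξ‖
          * Real.sqrt (∑ j, ((eLpNorm (fun x => v j x) 2 volume).toReal) ^ 2)
          * (eLpNorm (fun x => f x) 2 volume).toReal := by ring
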